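/- For all integers t ≥ 2 and m ≥ 2, the girth of the graph (T_{4t}; m) equals 4t. -/

import Mathlib

/-- `BX t` : bit strings of length at most `2t - 2` that do not have `0^{t-1}` as a
proper prefix (so `0^{t-1}` itself is allowed, but none of its proper extensions is). -/
def BX (t : ℕ) : Type :=
  {l : List Bool // l.length ≤ 2 * t - 2 ∧
    ¬ (List.replicate (t - 1) false <+: l ∧ List.replicate (t - 1) false ≠ l)}

/-- `CY t` : bit strings of length at most `2t - 3` that do not have `0^{t-1}` as a
prefix. -/
def CY (t : ℕ) : Type :=
  {l : List Bool // l.length ≤ 2 * t - 3 ∧ ¬ List.replicate (t - 1) false <+: l}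

/-- Vertex set of `(T_{4t}; m)` : the three pinned vertices `x* = Sum.inl 0`,
`y* = Sum.inl 1`, `z* = Sum.inl 2`, together with `(({x} × B'_t) ∪ ({y,z} × C_t)) × ZMod m`,
where the `x`-part is `Sum.inl`-labelled and the `y`/`z`-parts are `Sum.inr`-labelled with
`y` encoded by `true` and `z` by `false`. -/
def T4Vert (t m : ℕ) : Type := Fin 3 ⊕ ((BX t ⊕ Bool × CY t) × ZMod m)

/-- The edge relation of `(T_{4t}; m)`: each pinned vertex is joined to the corresponding
root; tree edges join each vertex to its children within each of the three trees; and
`(x, 0^{t-1}, i)` is joined to `(y, 0^{t-2}, i)` and to `(z, 0^{t-2}, i)`. -/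
def T4Rel (t m : ℕ) : T4Vert t m → T4Vert t m → Prop := fun a b =>
  (∃ (l : BX t) (i : ZMod m),
      a = Sum.inl 0 ∧ b = Sum.inr (Sum.inl l, i) ∧ l.val = []) ∨
  (∃ (l : CY t) (i : ZMod m),
      a = Sum.inl 1 ∧ b = Sum.inr (Sum.inr (true, l), i) ∧ l.val = []) ∨
  (∃ (l : CY t) (i : ZMod m),
      a = Sum.inl 2 ∧ b = Sum.inr (Sum.inr (false, l), i) ∧ l.val = []) ∨
  (∃ (l l' : BX t) (i : ZMod m) (c : Bool),
      a = Sum.inr (Sum.inl l, i) ∧ b = Sum.inr (Sum.inl l', i) ∧ l'.val = l.val ++ [c]) ∨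
  (∃ (s : Bool) (l l' : CY t) (i : ZMod m) (c : Bool),
      a = Sum.inr (Sum.inr (s, l), i) ∧ b = Sum.inr (Sum.inr (s, l'), i) ∧
      l'.val = l.val ++ [c]) ∨
  (∃ (s : Bool) (l : BX t) (l' : CY t) (i : ZMod m),
      a = Sum.inr (Sum.inl l, i) ∧ b = Sum.inr (Sum.inr (s, l'), i) ∧
      l.val = List.replicate (t - 1) false ∧ l'.val = List.replicate (t - 2) false)

/-- The graph `(T_{4t}; m)`. -/
def T4graph (t m : ℕ) : SimpleGraph (T4Vert t m) := SimpleGraph.fromRel (T4Rel t m)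

open SimpleGraph List
namespace S15

lemma BXext {t : ℕ} {a b : BX t} (h : a.val = b.val) : a = b := Subtype.ext h
lemma CYext {t : ℕ} {a b : CY t} (h : a.val = b.val) : a = b := Subtype.ext h

def lead : List Bool → ℕ
  | [] => 0
  | true :: _ => 0
  | false :: l => lead l + 1

lemma lead_append : ∀ (l : List Bool) (c : Bool),
    lead (l ++ [c]) = lead l ∨ lead (l ++ [c]) = lead l + 1
  | [], true => by simp [lead]
  | [], false => by simp [lead]
  | true :: l, c => by simp [lead]
  | false :: l, c => by
      rcases lead_append l c with h | h <;> simp [lead, h]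

lemma lead_replicate (n : ℕ) : lead (List.replicate n false) = n := by
  induction n with
  | zero => rfl
  | succ n ih => simp [List.replicate_succ, lead, ih]

def aBX (t : ℕ) : BX t :=
  ⟨List.replicate (t-1) false, by
    constructor
    · simp; omega
    · rintro ⟨_, hne⟩; exact hne rfl⟩

def aCY (t : ℕ) (ht : 2 ≤ t) : CY t :=
  ⟨List.replicate (t-2) false, by
    constructor
    · simp; omega
    · intro hp
      have := hp.length_le
      simp at this
      omega⟩

def XV (t m : ℕ) (k : ZMod m) : T4Vert t m := Sum.inr (Sum.inl (aBX t), k)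
def YV (t m : ℕ) (ht : 2 ≤ t) (s : Bool) (k : ZMod m) : T4Vert t m :=
  Sum.inr (Sum.inr (s, aCY t ht), k)

def pot (t : ℕ) {m : ℕ} (i : ZMod m) : T4Vert t m → ℤ
  | Sum.inl _ => t
  | Sum.inr (Sum.inl b, k) =>
      if k = i then (t:ℤ) - 1 + b.val.length - 2 * (min (lead b.val) (t-1) : ℕ)
      else (t:ℤ) + 1 + b.val.length
  | Sum.inr (Sum.inr (_, e), k) =>
      if k = i then (t:ℤ) - 1 + e.val.length - 2 * (min (lead e.val) (t-2) : ℕ)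
      else (t:ℤ) + 1 + e.val.length

lemma pot_rel {t m : ℕ} (ht : 2 ≤ t) (i : ZMod m) {u v : T4Vert t m} (h : T4Rel t m u v) :
    |pot t i u - pot t i v| ≤ 1 := by
  rw [abs_le]
  rcases h with ⟨l, k, rfl, rfl, hl⟩ | ⟨l, k, rfl, rfl, hl⟩ | ⟨l, k, rfl, rfl, hl⟩ |
    ⟨l, l', k, c, rfl, rfl, hl⟩ | ⟨s, l, l', k, c, rfl, rfl, hl⟩ | ⟨s, l, l', k, rfl, rfl, hl, hl'⟩
  · simp only [pot, hl, lead]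
    split_ifs <;> constructor <;> push_cast <;> simp [lead] <;> omega
  · simp only [pot, hl, lead]
    split_ifs <;> constructor <;> push_cast <;> simp [lead] <;> omega
  · simp only [pot, hl, lead]
    split_ifs <;> constructor <;> push_cast <;> simp [lead] <;> omega
  · rcases lead_append l.val c with hla | hla <;>
    · simp only [pot, hl, List.length_append, List.length_cons, List.length_nil, hla]
      split_ifs <;> constructor <;> push_cast <;> omega
  · rcases lead_append l.val c with hla | hla <;>
    · simp only [pot, hl, List.length_append, List.length_cons, List.length_nil, hla]
      split_ifs <;> constructor <;> push_cast <;> omega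
  · simp only [pot, hl, hl', lead_replicate, List.length_replicate, min_self]
    split_ifs <;> constructor <;> push_cast <;> omega

lemma pot_lip {t m : ℕ} (ht : 2 ≤ t) (i : ZMod m) {u v : T4Vert t m}
    (h : (T4graph t m).Adj u v) : |pot t i u - pot t i v| ≤ 1 := by
  rw [T4graph, fromRel_adj] at h
  rcases h.2 with h | h
  · exact pot_rel ht i h
  · rw [abs_sub_comm]; exact pot_rel ht i h

lemma pot_XV_self {t m : ℕ} (ht : 2 ≤ t) (i : ZMod m) : pot t i (XV t m i) = 0 := by
  simp only [XV, pot, if_pos rfl, aBX, lead_replicate, List.length_replicate, min_self]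
  push_cast
  omega

lemma pot_XV_ne {t m : ℕ} (ht : 2 ≤ t) {i k : ZMod m} (hk : k ≠ i) :
    pot t i (XV t m k) = 2 * t := by
  simp only [XV, pot, if_neg hk, aBX, List.length_replicate]
  push_cast
  omega

def chi {t m : ℕ} (s0 : Bool) : T4Vert t m → ℤ
  | Sum.inl j => if j = (if s0 then 1 else 2) then 1 else 0
  | Sum.inr (Sum.inl _, _) => 0
  | Sum.inr (Sum.inr (s, _), _) => if s = s0 then 1 else 0

lemma chi01 {t m : ℕ} (s0 : Bool) (v : T4Vert t m) : chi s0 v = 0 ∨ chi s0 v = 1 := by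
  rcases v with j | ⟨b | ⟨s, e⟩, k⟩ <;> unfold chi
  · split_ifs <;> simp <;> exact (em _).symm
  · simp
  · split_ifs <;> simp <;> exact (em _).symm

def CrossRel (t m : ℕ) : T4Vert t m → T4Vert t m → Prop := fun a b =>
  ∃ (s : Bool) (l : BX t) (l' : CY t) (i : ZMod m),
      a = Sum.inr (Sum.inl l, i) ∧ b = Sum.inr (Sum.inr (s, l'), i) ∧
      l.val = List.replicate (t - 1) false ∧ l'.val = List.replicate (t - 2) false

def FRel (t m : ℕ) : T4Vert t m → T4Vert t m → Prop := fun a b =>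
  (∃ (l : BX t) (i : ZMod m),
      a = Sum.inl 0 ∧ b = Sum.inr (Sum.inl l, i) ∧ l.val = []) ∨
  (∃ (l : CY t) (i : ZMod m),
      a = Sum.inl 1 ∧ b = Sum.inr (Sum.inr (true, l), i) ∧ l.val = []) ∨
  (∃ (l : CY t) (i : ZMod m),
      a = Sum.inl 2 ∧ b = Sum.inr (Sum.inr (false, l), i) ∧ l.val = []) ∨
  (∃ (l l' : BX t) (i : ZMod m) (c : Bool),
      a = Sum.inr (Sum.inl l, i) ∧ b = Sum.inr (Sum.inl l', i) ∧ l'.val = l.val ++ [c]) ∨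
  (∃ (s : Bool) (l l' : CY t) (i : ZMod m) (c : Bool),
      a = Sum.inr (Sum.inr (s, l), i) ∧ b = Sum.inr (Sum.inr (s, l'), i) ∧
      l'.val = l.val ++ [c])

lemma t4rel_iff {t m : ℕ} {u v : T4Vert t m} :
    T4Rel t m u v ↔ FRel t m u v ∨ CrossRel t m u v := by
  unfold T4Rel FRel CrossRel
  constructor
  · rintro (h | h | h | h | h | h)
    exacts [Or.inl (Or.inl h), Or.inl (Or.inr (Or.inl h)), Or.inl (Or.inr (Or.inr (Or.inl h))),
      Or.inl (Or.inr (Or.inr (Or.inr (Or.inl h)))), Or.inl (Or.inr (Or.inr (Or.inr (Or.inr h)))),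
      Or.inr h]
  · rintro ((h | h | h | h | h) | h)
    exacts [Or.inl h, Or.inr (Or.inl h), Or.inr (Or.inr (Or.inl h)),
      Or.inr (Or.inr (Or.inr (Or.inl h))), Or.inr (Or.inr (Or.inr (Or.inr (Or.inl h)))),
      Or.inr (Or.inr (Or.inr (Or.inr (Or.inr h))))]

lemma f01 : (0 : Fin 3) ≠ 1 := by decide
lemma f02 : (0 : Fin 3) ≠ 2 := by decide
lemma f10 : (1 : Fin 3) ≠ 0 := by decide
lemma f12 : (1 : Fin 3) ≠ 2 := by decide
lemma f20 : (2 : Fin 3) ≠ 0 := by decide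
lemma f21 : (2 : Fin 3) ≠ 1 := by decide

lemma cross_of_chi {t m : ℕ} (ht : 2 ≤ t) {s0 : Bool} {u v : T4Vert t m}
    (h : (T4graph t m).Adj u v) (hu : chi s0 u = 0) (hv : chi s0 v = 1) :
    ∃ k : ZMod m, u = XV t m k ∧ v = YV t m ht s0 k := by
  rw [T4graph, fromRel_adj] at h
  rcases h.2 with h | h <;>
  rcases h with ⟨l, k, rfl, rfl, hl⟩ | ⟨l, k, rfl, rfl, hl⟩ | ⟨l, k, rfl, rfl, hl⟩ |
    ⟨l, l', k, c, rfl, rfl, hl⟩ | ⟨s, l, l', k, c, rfl, rfl, hl⟩ | ⟨s, l, l', k, rfl, rfl, hl, hl'⟩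
  · cases s0 <;> simp [chi] at hu hv
  · cases s0 <;> simp [chi, f10, f12] at hu hv
  · cases s0 <;> simp [chi, f21, f20] at hu hv
  · simp [chi] at hv
  · simp only [chi] at hu hv
    split_ifs at hu hv <;> omega
  · refine ⟨k, ?_, ?_⟩
    · have hb : l = aBX t := BXext hl
      rw [XV, hb]
    · simp only [chi] at hv
      split_ifs at hv with hs
      · subst hs
        have hc : l' = aCY t ht := CYext hl'
        rw [YV, hc]
      · omega
  · cases s0 <;> simp [chi, f01, f02] at hu hv
  · cases s0 <;> simp [chi, f10, f12] at hu hv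
  · cases s0 <;> simp [chi, f21, f20] at hu hv
  · simp [chi] at hv
  · simp only [chi] at hu hv
    split_ifs at hu hv <;> omega
  · simp [chi] at hv

def rk {t m : ℕ} : T4Vert t m → ℕ
  | Sum.inl _ => 0
  | Sum.inr (Sum.inl b, _) => b.val.length + 1
  | Sum.inr (Sum.inr (_, e), _) => e.val.length + 1

def pBX {t : ℕ} (b : BX t) : BX t :=
  ⟨b.val.dropLast, by
    obtain ⟨h1, h2⟩ := b.2
    constructor
    · have := b.val.length_dropLast; omega
    · rintro ⟨hp, hne⟩
      apply h2
      refine ⟨hp.trans (List.dropLast_prefix _), ?_⟩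
      intro he
      apply hne
      apply hp.eq_of_length
      have hle := hp.length_le
      have hld : b.val.dropLast.length = b.val.length - 1 := List.length_dropLast
      have hbl : b.val.length = t - 1 := by rw [← he]; simp
      simp only [List.length_replicate] at hle ⊢
      omega⟩

def pCY {t : ℕ} (e : CY t) : CY t :=
  ⟨e.val.dropLast, by
    obtain ⟨h1, h2⟩ := e.2
    constructor
    · have := e.val.length_dropLast; omega
    · intro hp; exact h2 (hp.trans (List.dropLast_prefix _))⟩

def par {t m : ℕ} : T4Vert t m → T4Vert t m
  | Sum.inl j => Sum.inl j
  | Sum.inr (Sum.inl b, k) =>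
      if b.val = [] then Sum.inl 0 else Sum.inr (Sum.inl (pBX b), k)
  | Sum.inr (Sum.inr (s, e), k) =>
      if e.val = [] then Sum.inl (if s then 1 else 2)
      else Sum.inr (Sum.inr (s, pCY e), k)

def FG (t m : ℕ) : SimpleGraph (T4Vert t m) := SimpleGraph.fromRel (FRel t m)

lemma frel_parent {t m : ℕ} {u v : T4Vert t m} (h : FRel t m u v) :
    u = par v ∧ rk u + 1 = rk v := by
  rcases h with ⟨l, k, rfl, rfl, hl⟩ | ⟨l, k, rfl, rfl, hl⟩ | ⟨l, k, rfl, rfl, hl⟩ |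
    ⟨l, l', k, c, rfl, rfl, hl⟩ | ⟨s, l, l', k, c, rfl, rfl, hl⟩
  · simp [par, rk, hl]; rfl
  · simp [par, rk, hl]; rfl
  · simp [par, rk, hl]; rfl
  · constructor
    · have hne : l'.val ≠ [] := by simp [hl]
      simp only [par, if_neg hne]
      have hb : pBX l' = l := BXext (show l'.val.dropLast = l.val by rw [hl, List.dropLast_concat])
      rw [hb]; exact (if_neg hne).symm
    · simp [rk, hl]
  · constructor
    · have hne : l'.val ≠ [] := by simp [hl]
      simp only [par, if_neg hne]
      have hc : pCY l' = l := CYext (show l'.val.dropLast = l.val by rw [hl, List.dropLast_concat])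
      rw [hc]; exact (if_neg hne).symm
    · simp [rk, hl]

lemma FG_parent {t m : ℕ} : ∀ u v : T4Vert t m, (FG t m).Adj u v →
    (v = par u ∧ rk v + 1 = rk u) ∨ (u = par v ∧ rk u + 1 = rk v) := by
  intro u v h
  rw [FG, fromRel_adj] at h
  rcases h.2 with h | h
  · exact Or.inr (frel_parent h)
  · exact Or.inl (frel_parent h)

section General
variable {V : Type*} {G : SimpleGraph V}

private lemma telescope_darts (f : V → ℤ) {u v : V} (p : G.Walk u v) :
    (p.darts.map (fun d => f d.toProd.2 - f d.toProd.1)).sum = f v - f u := by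
  induction p with
  | nil => simp
  | cons h q ih => simp [ih]

private lemma walk_lip (f : V → ℤ) (hf : ∀ u v, G.Adj u v → |f u - f v| ≤ 1)
    {u v : V} (p : G.Walk u v) : |f u - f v| ≤ (p.length : ℤ) := by
  induction p with
  | nil => simp
  | @cons a b c h q ih =>
    have h1 := hf a b h
    have h2 : |f a - f c| ≤ |f a - f b| + |f b - f c| := abs_sub_le _ _ _
    simp only [Walk.length_cons]
    push_cast
    linarith

private lemma all_zero_of_nonneg : ∀ (l : List ℤ), (∀ x ∈ l, 0 ≤ x) → l.sum = 0 → ∀ x ∈ l, x = 0 := by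
  intro l
  induction l with
  | nil => simp
  | cons a l ih =>
    intro hpos h0 x hx
    have hs : 0 ≤ l.sum := List.sum_nonneg (fun y hy => hpos y (List.mem_cons_of_mem _ hy))
    have ha : 0 ≤ a := hpos a (List.mem_cons_self)
    simp only [List.sum_cons] at h0
    rcases List.mem_cons.mp hx with rfl | hx
    · linarith
    · exact ih (fun y hy => hpos y (List.mem_cons_of_mem _ hy)) (by linarith) x hx

private lemma sum_map_neg_eq (l : List ℤ) : (l.map (fun z => -z)).sum = -l.sum := by
  induction l with
  | nil => simp
  | cons a l ih => simp [ih]; ring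

private lemma exists_pos_and_neg {l : List ℤ}
    (hb : ∀ x ∈ l, x = -1 ∨ x = 0 ∨ x = 1) (h0 : l.sum = 0) {x : ℤ} (hx : x ∈ l)
    (hx1 : x = 1 ∨ x = -1) : (∃ y ∈ l, y = 1) ∧ (∃ y ∈ l, y = -1) := by
  have hneg : (∃ y ∈ l, y = -1) → (∃ y ∈ l, y = 1) := by
    rintro ⟨y, hy, rfl⟩
    by_contra hno
    push_neg at hno
    have : ∀ x ∈ l.map (fun z => -z), 0 ≤ x := by
      intro z hz
      obtain ⟨w, hw, rfl⟩ := List.mem_map.mp hz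
      rcases hb w hw with rfl | rfl | rfl
      · simp
      · simp
      · exact absurd rfl (hno _ hw)
    have hsum : (l.map (fun z => -z)).sum = 0 := by
      rw [sum_map_neg_eq, h0]; ring
    have := all_zero_of_nonneg _ this hsum (-(-1)) (List.mem_map_of_mem hy)
    norm_num at this
  have hpos : (∃ y ∈ l, y = 1) → (∃ y ∈ l, y = -1) := by
    rintro ⟨y, hy, rfl⟩
    by_contra hno
    push_neg at hno
    have hnn : ∀ x ∈ l, 0 ≤ x := by
      intro z hz
      rcases hb z hz with rfl | rfl | rfl
      · exact absurd rfl (hno _ hz)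
      · simp
      · simp
    have := all_zero_of_nonneg _ hnn h0 1 hy
    norm_num at this
  rcases hx1 with h | h
  · exact ⟨⟨x, hx, h⟩, hpos ⟨x, hx, h⟩⟩
  · exact ⟨hneg ⟨x, hx, h⟩, ⟨x, hx, h⟩⟩

private lemma acyc_aux {r : V → ℕ} {par : V → V}
    (H : ∀ u v, G.Adj u v → (v = par u ∧ r v + 1 = r u) ∨ (u = par v ∧ r u + 1 = r v))
    {u : V} (c : G.Walk u u) (hc : c.IsCycle) (hmax : ∀ w ∈ c.support, r w ≤ r u) : False := by
  cases c with
  | nil => exact Walk.IsCycle.not_of_nil hc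
  | @cons _ s _ h q =>
    have h3 : 3 ≤ (Walk.cons h q).length := hc.three_le_length
    rw [Walk.length_cons] at h3
    cases q with
    | nil => simp at h3
    | @cons _ s' _ h1 q2 =>
      obtain ⟨x, q3, h2, hq⟩ := Walk.exists_cons_eq_concat h1 q2
      -- q3 : Walk s x, h2 : Adj x u, hq : cons h1 q2 = q3.concat h2
      have hs_mem : s ∈ (Walk.cons h (Walk.cons h1 q2)).support := by simp
      have hx_mem : x ∈ (Walk.cons h (Walk.cons h1 q2)).support := by
        rw [Walk.support_cons, hq, Walk.support_concat]
        simp [q3.end_mem_support]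
      have hs : s = par u := by
        rcases H u s h with ⟨h', _⟩ | ⟨_, h'⟩
        · exact h'
        · have := hmax s hs_mem; omega
      have hx : x = par u := by
        rcases H x u h2 with ⟨_, h'⟩ | ⟨h', _⟩
        · have := hmax x hx_mem; omega
        · exact h'
      have hsx : s = x := hs.trans hx.symm
      -- contradiction with nodup
      have hnd : (Walk.cons h1 q2).support.Nodup := by
        have := hc.support_nodup
        rwa [Walk.support_cons, List.tail_cons] at this
      cases q3 with
      | nil =>
        -- q3 : Walk s s, so x = s and cons h1 q2 = cons h2 nil, q2.length = 0
        have := congrArg Walk.length hq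
        simp only [Walk.length_concat, Walk.length_cons, Walk.length_nil] at this
        rw [Walk.length_cons] at h3
        omega
      | @cons _ w _ h4 q4 =>
        have hsup := congrArg Walk.support hq
        rw [Walk.support_concat, Walk.support_cons, Walk.support_cons] at hsup
        -- hsup : s :: q2.support = (s :: q4.support).concat u
        have hq2 : q2.support = q4.support.concat u := by
          rw [List.cons_append] at hsup
          rw [List.concat_eq_append]
          exact (List.cons_injective.eq_iff.mp hsup)
        have hx4 : x ∈ q4.support := q4.end_mem_support
        have : s ∈ q2.support := by
          rw [hq2, List.concat_eq_append, List.mem_append]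
          exact Or.inl (hsx ▸ hx4)
        rw [Walk.support_cons, List.nodup_cons] at hnd
        exact hnd.1 this

private lemma acyclic_of_parent (r : V → ℕ) (par : V → V)
    (H : ∀ u v, G.Adj u v → (v = par u ∧ r v + 1 = r u) ∨ (u = par v ∧ r u + 1 = r v)) :
    G.IsAcyclic := by
  classical
  intro v0 c hc
  obtain ⟨u, hu, hmax⟩ := Finset.exists_max_image c.support.toFinset r ⟨v0, by simp⟩
  have hu' : u ∈ c.support := by simpa using hu
  have hc' := hc.rotate hu'
  refine acyc_aux H (c.rotate u hu') hc' ?_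
  intro w hw
  apply hmax
  simp only [List.mem_toFinset]
  rw [Walk.support_eq_cons] at hw
  rcases List.mem_cons.mp hw with rfl | hw
  · exact hu'
  · exact List.mem_of_mem_tail ((c.support_rotate u hu').mem_iff.mp hw)

end General


lemma FG_acyclic {t m : ℕ} : (FG t m).IsAcyclic := acyclic_of_parent rk par FG_parent

lemma lower {t m : ℕ} (ht : 2 ≤ t) {a : T4Vert t m} (w : (T4graph t m).Walk a a)
    (hw : w.IsCycle) : 4 * t ≤ w.length := by
  classical
  have hedges_eq : w.edges = w.darts.map SimpleGraph.Dart.edge := rfl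
  -- Step 1: the cycle uses a cross dart
  have hcross : ∃ d ∈ w.darts,
      CrossRel t m d.toProd.1 d.toProd.2 ∨ CrossRel t m d.toProd.2 d.toProd.1 := by
    by_contra hno
    push_neg at hno
    have hFE : ∀ e ∈ w.edges, e ∈ (FG t m).edgeSet := by
      intro e he
      rw [hedges_eq] at he
      obtain ⟨d, hd, rfl⟩ := List.mem_map.mp he
      have hadj : (T4graph t m).Adj d.toProd.1 d.toProd.2 := d.adj
      obtain ⟨hne, hrel⟩ := (SimpleGraph.fromRel_adj (T4Rel t m) _ _).mp hadj
      have hnc := hno d hd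
      have hF : FRel t m d.toProd.1 d.toProd.2 ∨ FRel t m d.toProd.2 d.toProd.1 := by
        rcases hrel with h | h
        · rcases t4rel_iff.mp h with h | h
          · exact Or.inl h
          · exact absurd h hnc.1
        · rcases t4rel_iff.mp h with h | h
          · exact Or.inr h
          · exact absurd h hnc.2
      have hadj' : (FG t m).Adj d.toProd.1 d.toProd.2 :=
        (SimpleGraph.fromRel_adj (FRel t m) _ _).mpr ⟨hne, hF⟩
      exact (FG t m).mem_edgeSet.mpr hadj'
    exact FG_acyclic _ (hw.transfer hFE)
  obtain ⟨d, hd, hcr⟩ := hcross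
  obtain ⟨s0, hj⟩ : ∃ s0 : Bool,
      chi s0 d.toProd.2 - chi s0 d.toProd.1 = 1 ∨
        chi s0 d.toProd.2 - chi s0 d.toProd.1 = -1 := by
    rcases hcr with ⟨s0, l, l', k, h1, h2, _, _⟩ | ⟨s0, l, l', k, h1, h2, _, _⟩
    · exact ⟨s0, by rw [h1, h2]; simp [chi]⟩
    · exact ⟨s0, by rw [h1, h2]; simp [chi]⟩
  set F : (T4graph t m).Dart → ℤ := fun d' => chi s0 d'.toProd.2 - chi s0 d'.toProd.1 with hF
  have h0 : (w.darts.map F).sum = 0 := by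
    have h0' := telescope_darts (chi (t := t) (m := m) s0) w
    rw [sub_self] at h0'
    exact h0'
  have hb : ∀ x ∈ w.darts.map F, x = -1 ∨ x = 0 ∨ x = 1 := by
    intro x hx
    obtain ⟨d', hd', rfl⟩ := List.mem_map.mp hx
    rcases chi01 s0 d'.toProd.1 with h1 | h1 <;> rcases chi01 s0 d'.toProd.2 with h2 | h2 <;>
      simp [hF, h1, h2]
  have hxmem : F d ∈ w.darts.map F := List.mem_map_of_mem (f := F) hd
  obtain ⟨⟨y1, hy1m, hy1v⟩, ⟨y2, hy2m, hy2v⟩⟩ := exists_pos_and_neg hb h0 hxmem hj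
  obtain ⟨d1, hd1, hd1e⟩ := List.mem_map.mp hy1m
  obtain ⟨d2, hd2, hd2e⟩ := List.mem_map.mp hy2m
  have hj1 : chi s0 d1.toProd.2 - chi s0 d1.toProd.1 = 1 := hd1e.trans hy1v
  have hj2 : chi s0 d2.toProd.2 - chi s0 d2.toProd.1 = -1 := hd2e.trans hy2v
  obtain ⟨c1a, c1b⟩ : chi s0 d1.toProd.1 = 0 ∧ chi s0 d1.toProd.2 = 1 := by
    rcases chi01 s0 d1.toProd.1 with h1 | h1 <;> rcases chi01 s0 d1.toProd.2 with h2 | h2 <;>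
      omega
  obtain ⟨c2a, c2b⟩ : chi s0 d2.toProd.1 = 1 ∧ chi s0 d2.toProd.2 = 0 := by
    rcases chi01 s0 d2.toProd.1 with h1 | h1 <;> rcases chi01 s0 d2.toProd.2 with h2 | h2 <;>
      omega
  obtain ⟨k1, hu1, hv1⟩ := cross_of_chi ht d1.adj c1a c1b
  obtain ⟨k2, hu2, hv2⟩ := cross_of_chi ht d2.adj.symm c2b c2a
  -- hu2 : d2.toProd.2 = XV t m k2, hv2 : d2.toProd.1 = YV t m ht s0 k2
  have hk12 : k1 ≠ k2 := by
    rintro rfl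
    have e1 : d1.edge = s(XV t m k1, YV t m ht s0 k1) := by
      rw [← hu1, ← hv1]
      rfl
    have e2 : d2.edge = s(YV t m ht s0 k1, XV t m k1) := by
      rw [← hv2, ← hu2]
      rfl
    have hedge : d1.edge = d2.edge := by rw [e1, e2, Sym2.eq_swap]
    have hne12 : d1 ≠ d2 := by
      intro he
      rw [he] at c1a
      omega
    have hnd : (w.darts.map SimpleGraph.Dart.edge).Nodup := by
      rw [← hedges_eq]; exact hw.isCircuit.isTrail.edges_nodup
    exact hne12 (List.inj_on_of_nodup_map hnd hd1 hd2 hedge)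
  have hm1 : XV t m k1 ∈ w.support := by
    have h := w.dart_fst_mem_support_of_mem_darts hd1
    rwa [show d1.fst = d1.toProd.1 from rfl, hu1] at h
  have hm2 : XV t m k2 ∈ w.support := by
    have h := w.dart_snd_mem_support_of_mem_darts hd2
    rwa [show d2.snd = d2.toProd.2 from rfl, hu2] at h
  have hW := hw.rotate hm1
  have hlenrot : (w.rotate _ hm1).length = w.length := by
    have h1 := (w.rotate_edges _ hm1).perm.length_eq
    rwa [Walk.length_edges, Walk.length_edges] at h1
  have hm2' : XV t m k2 ∈ (w.rotate _ hm1).support := by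
    have h2 := hm2
    rw [← Walk.take_spec w hm1, Walk.mem_support_append_iff] at h2
    simp only [Walk.rotate, Walk.mem_support_append_iff]
    exact h2.symm
  have hsplit := (w.rotate _ hm1).take_spec hm2'
  have hlen : ((w.rotate _ hm1).takeUntil _ hm2').length
      + ((w.rotate _ hm1).dropUntil _ hm2').length = w.length := by
    have hc := congrArg Walk.length hsplit
    rw [Walk.length_append] at hc
    omega
  have hb1 : (2 * t : ℤ) ≤ (((w.rotate _ hm1).takeUntil _ hm2').length : ℤ) := by
    have hl := walk_lip (pot t k1) (fun u v h => pot_lip ht k1 h)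
      ((w.rotate _ hm1).takeUntil _ hm2')
    rw [pot_XV_self ht k1, pot_XV_ne ht hk12.symm, zero_sub, abs_neg,
      abs_of_nonneg (by positivity)] at hl
    exact hl
  have hb2 : (2 * t : ℤ) ≤ (((w.rotate _ hm1).dropUntil _ hm2').length : ℤ) := by
    have hl := walk_lip (pot t k1) (fun u v h => pot_lip ht k1 h)
      ((w.rotate _ hm1).dropUntil _ hm2')
    rw [pot_XV_self ht k1, pot_XV_ne ht hk12.symm, sub_zero,
      abs_of_nonneg (by positivity)] at hl
    exact hl
  have hfin : (4 * t : ℤ) ≤ (w.length : ℤ) := by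
    have hc := congrArg (Nat.cast : ℕ → ℤ) hlen
    push_cast at hc
    linarith
  exact_mod_cast hfin



def bxz (t n : ℕ) : BX t :=
  ⟨List.replicate (min n (t-1)) false, by
    constructor
    · simp; omega
    · rintro ⟨hp, hne⟩
      have hl := hp.length_le
      simp only [List.length_replicate] at hl
      apply hne
      rw [show min n (t-1) = t - 1 by omega]⟩

def cyz (t : ℕ) (ht : 2 ≤ t) (n : ℕ) : CY t :=
  ⟨List.replicate (min n (t-2)) false, by
    constructor
    · simp; omega
    · intro hp
      have hl := hp.length_le
      simp only [List.length_replicate] at hl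
      omega⟩

def xv (t m n : ℕ) (k : ZMod m) : T4Vert t m := Sum.inr (Sum.inl (bxz t n), k)
def yv (t m : ℕ) (ht : 2 ≤ t) (n : ℕ) (k : ZMod m) : T4Vert t m :=
  Sum.inr (Sum.inr (true, cyz t ht n), k)
def xstar (t m : ℕ) : T4Vert t m := Sum.inl 0
def ystar (t m : ℕ) : T4Vert t m := Sum.inl 1

def tag (t m : ℕ) : T4Vert t m → ℕ
  | Sum.inl j => j.val
  | Sum.inr (Sum.inl _, k) => if k = 0 then 3 else 4
  | Sum.inr (Sum.inr (s, _), k) => if s then (if k = 0 then 5 else 6) else (if k = 0 then 7 else 8)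

def dep (t m : ℕ) : T4Vert t m → ℕ
  | Sum.inl _ => 0
  | Sum.inr (Sum.inl b, _) => b.val.length
  | Sum.inr (Sum.inr (_, e), _) => e.val.length

lemma dep_xv (t m n : ℕ) (k : ZMod m) : dep t m (xv t m n k) = min n (t-1) := by
  simp [dep, xv, bxz]

lemma dep_yv (t m : ℕ) (ht : 2 ≤ t) (n : ℕ) (k : ZMod m) :
    dep t m (yv t m ht n k) = min n (t-2) := by
  simp [dep, yv, cyz]

section adj
variable (t m : ℕ)

lemma adj_xstar (k : ZMod m) : (T4graph t m).Adj (xstar t m) (xv t m 0 k) :=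
  (SimpleGraph.fromRel_adj _ _ _).mpr ⟨Sum.inl_ne_inr,
    Or.inl (Or.inl ⟨bxz t 0, k, rfl, rfl, by simp [bxz]⟩)⟩

lemma adj_ystar (ht : 2 ≤ t) (k : ZMod m) : (T4graph t m).Adj (ystar t m) (yv t m ht 0 k) :=
  (SimpleGraph.fromRel_adj _ _ _).mpr ⟨Sum.inl_ne_inr,
    Or.inl (Or.inr (Or.inl ⟨cyz t ht 0, k, rfl, rfl, by simp [cyz]⟩))⟩

lemma adj_xv {n : ℕ} (hn : n + 1 ≤ t - 1) (k : ZMod m) :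
    (T4graph t m).Adj (xv t m n k) (xv t m (n+1) k) := by
  refine (SimpleGraph.fromRel_adj _ _ _).mpr ⟨?_, Or.inl (Or.inr (Or.inr (Or.inr (Or.inl
    ⟨bxz t n, bxz t (n+1), k, false, rfl, rfl, ?_⟩))))⟩
  · intro he
    have := congrArg (dep t m) he
    rw [dep_xv, dep_xv] at this
    omega
  · show List.replicate (min (n+1) (t-1)) false = List.replicate (min n (t-1)) false ++ [false]
    rw [show min (n+1) (t-1) = n + 1 by omega, show min n (t-1) = n by omega,
      List.replicate_succ']

lemma adj_yv (ht : 2 ≤ t) {n : ℕ} (hn : n + 1 ≤ t - 2) (k : ZMod m) :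
    (T4graph t m).Adj (yv t m ht n k) (yv t m ht (n+1) k) := by
  refine (SimpleGraph.fromRel_adj _ _ _).mpr ⟨?_, Or.inl (Or.inr (Or.inr (Or.inr (Or.inr (Or.inl
    ⟨true, cyz t ht n, cyz t ht (n+1), k, false, rfl, rfl, ?_⟩)))))⟩
  · intro he
    have := congrArg (dep t m) he
    rw [dep_yv, dep_yv] at this
    omega
  · show List.replicate (min (n+1) (t-2)) false = List.replicate (min n (t-2)) false ++ [false]
    rw [show min (n+1) (t-2) = n + 1 by omega, show min n (t-2) = n by omega,
      List.replicate_succ']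

lemma adj_cross (ht : 2 ≤ t) (k : ZMod m) :
    (T4graph t m).Adj (xv t m (t-1) k) (yv t m ht (t-2) k) := by
  refine (SimpleGraph.fromRel_adj _ _ _).mpr ⟨?_, Or.inl (Or.inr (Or.inr (Or.inr
    (Or.inr (Or.inr ⟨true, bxz t (t-1), cyz t ht (t-2), k, rfl, rfl, ?_, ?_⟩)))))⟩
  · rintro h
    simp only [xv, yv] at h
    injection h with h1
    injection h1 with h2 h3
    exact Sum.inl_ne_inr h2
  · show List.replicate (min (t-1) (t-1)) false = List.replicate (t-1) false
    rw [min_self]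
  · show List.replicate (min (t-2) (t-2)) false = List.replicate (t-2) false
    rw [min_self]

def wx (k : ZMod m) : (n : ℕ) → n ≤ t - 1 → (T4graph t m).Walk (xv t m 0 k) (xv t m n k)
  | 0, _ => Walk.nil
  | n+1, h => (wx k n (by omega)).concat (adj_xv t m h k)

def wy (ht : 2 ≤ t) (k : ZMod m) :
    (n : ℕ) → n ≤ t - 2 → (T4graph t m).Walk (yv t m ht 0 k) (yv t m ht n k)
  | 0, _ => Walk.nil
  | n+1, h => (wy ht k n (by omega)).concat (adj_yv t m ht h k)

lemma wx_length (k : ZMod m) : ∀ (n : ℕ) (hn : n ≤ t - 1), (wx t m k n hn).length = n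
  | 0, _ => rfl
  | n+1, h => by rw [wx, Walk.length_concat, wx_length k n]

lemma wy_length (ht : 2 ≤ t) (k : ZMod m) :
    ∀ (n : ℕ) (hn : n ≤ t - 2), (wy t m ht k n hn).length = n
  | 0, _ => rfl
  | n+1, h => by rw [wy, Walk.length_concat, wy_length ht k n]

lemma wx_support (k : ZMod m) : ∀ (n : ℕ) (hn : n ≤ t - 1),
    (wx t m k n hn).support = (List.range (n+1)).map (fun j => xv t m j k)
  | 0, _ => rfl
  | n+1, h => by
      rw [wx, Walk.support_concat, wx_support k n]
      simp [List.range_succ]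

lemma wy_support (ht : 2 ≤ t) (k : ZMod m) : ∀ (n : ℕ) (hn : n ≤ t - 2),
    (wy t m ht k n hn).support = (List.range (n+1)).map (fun j => yv t m ht j k)
  | 0, _ => rfl
  | n+1, h => by
      rw [wy, Walk.support_concat, wy_support ht k n]
      simp [List.range_succ]

lemma wx_edges (k : ZMod m) : ∀ (n : ℕ) (hn : n ≤ t - 1),
    (wx t m k n hn).edges = (List.range n).map (fun j => s(xv t m j k, xv t m (j+1) k))
  | 0, _ => rfl
  | n+1, h => by
      rw [wx, Walk.edges_concat, wx_edges k n]
      simp [List.range_succ]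

lemma wy_edges (ht : 2 ≤ t) (k : ZMod m) : ∀ (n : ℕ) (hn : n ≤ t - 2),
    (wy t m ht k n hn).edges = (List.range n).map (fun j => s(yv t m ht j k, yv t m ht (j+1) k))
  | 0, _ => rfl
  | n+1, h => by
      rw [wy, Walk.edges_concat, wy_edges ht k n]
      simp [List.range_succ]

def thePath (ht : 2 ≤ t) : (T4graph t m).Walk (yv t m ht (t-2) 0) (xv t m (t-1) 0) :=
  (wy t m ht 0 (t-2) le_rfl).reverse.append
    (Walk.cons ((adj_ystar t m ht 0).symm)
      (Walk.cons (adj_ystar t m ht 1)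
        ((wy t m ht 1 (t-2) le_rfl).append
          (Walk.cons ((adj_cross t m ht 1).symm)
            ((wx t m 1 (t-1) le_rfl).reverse.append
              (Walk.cons ((adj_xstar t m 1).symm)
                (Walk.cons (adj_xstar t m 0)
                  (wx t m 0 (t-1) le_rfl))))))))

def theCycle (ht : 2 ≤ t) : (T4graph t m).Walk (xv t m (t-1) 0) (xv t m (t-1) 0) :=
  Walk.cons (adj_cross t m ht 0) (thePath t m ht)

lemma theCycle_length (ht : 2 ≤ t) : (theCycle t m ht).length = 4 * t := by
  simp only [theCycle, thePath, Walk.length_cons, Walk.length_append, Walk.length_reverse,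
    wx_length, wy_length]
  omega

end adj


section cyc
variable (t m : ℕ)

lemma zmod_one_ne_zero (hm : 2 ≤ m) : (1 : ZMod m) ≠ 0 := by
  have : Fact (1 < m) := ⟨hm⟩
  exact one_ne_zero

lemma tag_xv0 (n : ℕ) : tag t m (xv t m n 0) = 3 := by simp [tag, xv]
lemma tag_xv1 (hm : 2 ≤ m) (n : ℕ) : tag t m (xv t m n 1) = 4 := by
  simp [tag, xv, zmod_one_ne_zero m hm]

lemma xv_ne_yv (ht : 2 ≤ t) {n n' : ℕ} {k k' : ZMod m} : xv t m n k ≠ yv t m ht n' k' := by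
  intro h
  simp only [xv, yv] at h
  injection h with h1
  injection h1 with h2 h3
  exact Sum.inl_ne_inr h2

lemma xv_ne_xstar {n : ℕ} {k : ZMod m} : xv t m n k ≠ xstar t m := by
  intro h; exact Sum.inr_ne_inl h

lemma xv_ne_ystar {n : ℕ} {k : ZMod m} : xv t m n k ≠ ystar t m := by
  intro h; exact Sum.inr_ne_inl h

lemma yv_ne_xstar (ht : 2 ≤ t) {n : ℕ} {k : ZMod m} : yv t m ht n k ≠ xstar t m := by
  intro h; exact Sum.inr_ne_inl h

lemma yv_ne_ystar (ht : 2 ≤ t) {n : ℕ} {k : ZMod m} : yv t m ht n k ≠ ystar t m := by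
  intro h; exact Sum.inr_ne_inl h

lemma ystar_ne_xstar : ystar t m ≠ xstar t m := by
  intro h
  injection h with h1
  exact absurd h1 (by decide)

lemma xv_inj {n n' : ℕ} {k k' : ZMod m} (h : xv t m n k = xv t m n' k') :
    min n (t-1) = min n' (t-1) ∧ k = k' := by
  simp only [xv, bxz] at h
  injection h with h1
  injection h1 with h2 h3
  injection h2 with h4
  refine ⟨?_, h3⟩
  have h5 := congrArg (fun b : BX t => b.val.length) h4
  simpa using h5

lemma yv_inj (ht : 2 ≤ t) {n n' : ℕ} {k k' : ZMod m} (h : yv t m ht n k = yv t m ht n' k') :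
    min n (t-2) = min n' (t-2) ∧ k = k' := by
  simp only [yv, cyz] at h
  injection h with h1
  injection h1 with h2 h3
  injection h2 with h4
  injection h4 with h5 h6
  refine ⟨?_, h3⟩
  have h7 := congrArg (fun e : CY t => e.val.length) h6
  simpa using h7

lemma nodup_xblock (ht : 2 ≤ t) {N : ℕ} (hN : N ≤ t) (k : ZMod m) :
    ((List.range N).map (fun j => xv t m j k)).Nodup := by
  refine List.nodup_range.map_on ?_
  intro x hx y hy hxy
  have h := (xv_inj t m hxy).1
  simp only [List.mem_range] at hx hy
  omega

lemma nodup_yblock (ht : 2 ≤ t) {N : ℕ} (hN : N ≤ t - 1) (k : ZMod m) :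
    ((List.range N).map (fun j => yv t m ht j k)).Nodup := by
  refine List.nodup_range.map_on ?_
  intro x hx y hy hxy
  have h := (yv_inj t m ht hxy).1
  simp only [List.mem_range] at hx hy
  omega

lemma thePath_nodup (ht : 2 ≤ t) (hm : 2 ≤ m) : (thePath t m ht).support.Nodup := by
  simp only [thePath, Walk.support_append, Walk.support_cons, Walk.support_reverse,
    wx_support, wy_support, List.tail_cons]
  rw [List.nodup_append]
  refine ⟨List.nodup_reverse.mpr (nodup_yblock t m ht (by omega) 0), ?_, ?_⟩
  · rw [List.nodup_cons]
    constructor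
    · intro hmem
      simp only [List.mem_append, List.mem_reverse, List.mem_map, List.mem_cons,
        List.mem_range] at hmem
      rcases hmem with ⟨j, _, hj⟩ | ⟨j, _, hj⟩ | hj | ⟨j, _, hj⟩
      · exact yv_ne_ystar t m ht hj
      · exact xv_ne_ystar t m hj
      · exact ystar_ne_xstar t m hj
      · exact xv_ne_ystar t m hj
    · rw [List.nodup_append]
      refine ⟨nodup_yblock t m ht (by omega) 1, ?_, ?_⟩
      · rw [List.nodup_append]
        refine ⟨List.nodup_reverse.mpr (nodup_xblock t m ht (by omega) 1), ?_, ?_⟩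
        · rw [List.nodup_cons]
          refine ⟨?_, nodup_xblock t m ht (by omega) 0⟩
          intro hmem
          simp only [List.mem_map, List.mem_range] at hmem
          obtain ⟨j, _, hj⟩ := hmem
          exact xv_ne_xstar t m hj
        · intro a ha b hb hab; subst hab
          simp only [List.mem_reverse, List.mem_map, List.mem_range] at ha
          obtain ⟨j, _, rfl⟩ := ha
          simp only [List.mem_cons, List.mem_map, List.mem_range] at hb
          rcases hb with hj' | ⟨j', _, hj'⟩
          · exact xv_ne_xstar t m hj'
          · have h2 := (xv_inj t m hj'.symm).2
            exact zmod_one_ne_zero m hm h2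
      · intro a ha b hb hab; subst hab
        simp only [List.mem_map, List.mem_range] at ha
        obtain ⟨j, _, rfl⟩ := ha
        simp only [List.mem_append, List.mem_reverse, List.mem_cons, List.mem_map,
          List.mem_range] at hb
        rcases hb with ⟨j', _, hj'⟩ | hj' | ⟨j', _, hj'⟩
        · exact xv_ne_yv t m ht hj'
        · exact yv_ne_xstar t m ht hj'
        · exact xv_ne_yv t m ht hj'
  · intro a ha b hb hab; subst hab
    simp only [List.mem_reverse, List.mem_map, List.mem_range] at ha
    obtain ⟨j, _, rfl⟩ := ha
    simp only [List.mem_cons, List.mem_append, List.mem_reverse, List.mem_map,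
      List.mem_range] at hb
    rcases hb with hj' | ⟨j', _, hj'⟩ | ⟨j', _, hj'⟩ | hj' | ⟨j', _, hj'⟩
    · exact yv_ne_ystar t m ht hj'
    · have h2 := (yv_inj t m ht hj'.symm).2
      exact zmod_one_ne_zero m hm h2.symm
    · exact xv_ne_yv t m ht hj'
    · exact yv_ne_xstar t m ht hj'
    · exact xv_ne_yv t m ht hj'

lemma closing_not_mem (ht : 2 ≤ t) (hm : 2 ≤ m) :
    s(xv t m (t-1) 0, yv t m ht (t-2) 0) ∉ (thePath t m ht).edges := by
  intro h
  simp only [thePath, Walk.edges_append, Walk.edges_cons, Walk.edges_reverse,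
    wx_edges, wy_edges, List.mem_append, List.mem_cons, List.mem_reverse, List.mem_map,
    List.mem_range] at h
  rcases h with ⟨j, _, he⟩ | he | he | ⟨j, _, he⟩ | he | ⟨j, _, he⟩ | he | he | ⟨j, _, he⟩
  · rcases Sym2.eq_iff.mp he with ⟨h1, h2⟩ | ⟨h1, h2⟩
    · exact xv_ne_yv t m ht h1.symm
    · exact xv_ne_yv t m ht h2.symm
  · rcases Sym2.eq_iff.mp he with ⟨h1, h2⟩ | ⟨h1, h2⟩
    · exact xv_ne_yv t m ht h1
    · exact xv_ne_ystar t m h1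
  · rcases Sym2.eq_iff.mp he with ⟨h1, h2⟩ | ⟨h1, h2⟩
    · exact xv_ne_ystar t m h1
    · exact xv_ne_yv t m ht h1
  · rcases Sym2.eq_iff.mp he with ⟨h1, h2⟩ | ⟨h1, h2⟩
    · exact xv_ne_yv t m ht h1.symm
    · exact xv_ne_yv t m ht h2.symm
  · rcases Sym2.eq_iff.mp he with ⟨h1, h2⟩ | ⟨h1, h2⟩
    · exact xv_ne_yv t m ht h1
    · have h3 := (xv_inj t m h1).2
      exact zmod_one_ne_zero m hm h3.symm
  · rcases Sym2.eq_iff.mp he with ⟨h1, h2⟩ | ⟨h1, h2⟩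
    · exact xv_ne_yv t m ht h2
    · exact xv_ne_yv t m ht h1
  · rcases Sym2.eq_iff.mp he with ⟨h1, h2⟩ | ⟨h1, h2⟩
    · exact yv_ne_xstar t m ht h2
    · exact xv_ne_xstar t m h1
  · rcases Sym2.eq_iff.mp he with ⟨h1, h2⟩ | ⟨h1, h2⟩
    · exact xv_ne_xstar t m h1
    · exact yv_ne_xstar t m ht h2
  · rcases Sym2.eq_iff.mp he with ⟨h1, h2⟩ | ⟨h1, h2⟩
    · exact xv_ne_yv t m ht h2
    · exact xv_ne_yv t m ht h1

lemma theCycle_isCycle (ht : 2 ≤ t) (hm : 2 ≤ m) : (theCycle t m ht).IsCycle := by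
  rw [theCycle, Walk.cons_isCycle_iff]
  exact ⟨(Walk.isPath_def _).mpr (thePath_nodup t m ht hm), closing_not_mem t m ht hm⟩

end cyc

end S15

/-- for all integers `t ≥ 2` and `m ≥ 2`, the girth of `(T_{4t}; m)`
equals `4t`. -/
theorem statement15 (t m : ℕ) (ht : 2 ≤ t) (hm : 2 ≤ m) :
    (T4graph t m).egirth = ((4 * t : ℕ) : ℕ∞) := by
  apply _root_.le_antisymm
  · have hcyc := S15.theCycle_isCycle t m ht hm
    have hle : (T4graph t m).egirth ≤ ((S15.theCycle t m ht).length : ℕ∞) := by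
      rw [SimpleGraph.egirth]
      exact iInf_le_of_le _ (iInf_le_of_le (S15.theCycle t m ht) (iInf_le _ hcyc))
    rwa [S15.theCycle_length t m ht] at hle
  · rw [SimpleGraph.le_egirth]
    intro a w hw
    exact_mod_cast Nat.cast_le.mpr (S15.lower ht w hw)
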